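/- Let C be a category with pullbacks, K a Grothendieck pretopology on C, and B a full subcategory of C which is a base for (C, K); let K|_B be the induced coverage on B. Let A be an object of B and let S be a sieve on A in B (a collection of morphisms in B with target A that is closed under precomposition with arbitrary morphisms of B). Let (S) be the sieve on A in C consisting of all morphisms to A in C that factor through some morphism of S. Then S contains a covering family in K|_B if and only if (S) contains a covering family in K. -/

import Mathlib

open CategoryTheory Limits

universe w v u

/-- A morphism of `C` between objects satisfying `P`, regarded as a morphism of the full
subcategory of `C` determined by `P`. -/
def FullSubcategory.homOf {C : Type u} [Category.{v} C] {P : C → Prop} {X Y : C}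
    (hX : P X) (hY : P Y) (f : X ⟶ Y) :
    (⟨X, hX⟩ : CategoryTheory.ObjectProperty.FullSubcategory P) ⟶ ⟨Y, hY⟩ := ObjectProperty.homMk f

/-- The family of morphisms in `C` underlying a presieve on an object of the full
subcategory of `C` determined by `P`. -/
def Presieve.inAmbient {C : Type u} [Category.{v} C] {P : C → Prop}
    {A : CategoryTheory.ObjectProperty.FullSubcategory P} (S : Presieve A) : Presieve A.obj :=
  fun Y f => ∃ hY : P Y, S (FullSubcategory.homOf hY A.property f)

/-- **The sieve-translation step in the proof of part (3) of the Comparison Lemma.**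
Let `C` be a category with pullbacks, `K` a Grothendieck pretopology on `C`, and `P` a
predicate on objects of `C` whose full subcategory `B` is a base for `(C, K)`.  Let `A` be
an object of `B` and `S` a sieve on `A` in `B`.  Then `S` contains a covering family of the
restricted coverage `K|_B` if and only if the sieve `(S)` on `A` in `C`, consisting of all
morphisms to `A` factoring through a morphism of `S`, contains a `K`-covering family. -/
theorem sieve_contains_cover_iff_extension_contains_cover
    {C : Type u} [Category.{v} C] [HasPullbacks C]
    (K : Pretopology C) (P : C → Prop)
    (hbase : ∀ X : C, ∃ S ∈ K.coverings X, ∀ ⦃Y : C⦄ ⦃f : Y ⟶ X⦄, S f → P Y)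
    (A : CategoryTheory.ObjectProperty.FullSubcategory P) (S : Sieve A) :
    (∃ T : Presieve A, Presieve.inAmbient T ∈ K.coverings A.obj ∧
      ∀ ⦃Y : CategoryTheory.ObjectProperty.FullSubcategory P⦄ ⦃f : Y ⟶ A⦄, T f → S f) ↔
    (∃ T' : Presieve A.obj, T' ∈ K.coverings A.obj ∧
      ∀ ⦃Y : C⦄ ⦃f : Y ⟶ A.obj⦄, T' f →
        ∃ (Z : CategoryTheory.ObjectProperty.FullSubcategory P) (g : Z ⟶ A) (h : Y ⟶ Z.obj),
          S g ∧ f = h ≫ (ObjectProperty.ι P).map g) := by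
  constructor
  · rintro ⟨T, hT, hTS⟩
    refine ⟨Presieve.inAmbient T, hT, ?_⟩
    rintro Y f ⟨hY, hTf⟩
    exact ⟨⟨Y, hY⟩, FullSubcategory.homOf hY A.property f, 𝟙 Y, hTS hTf,
      (Category.id_comp _).symm⟩
  · rintro ⟨T', hT', hfac⟩
    -- refine each object of T' by a cover with sources in P
    choose Ti hTi hTiP using fun Y => hbase Y
    let R : Presieve A.obj := T'.bind fun Y f _ => Ti Y
    have hR : R ∈ K.coverings A.obj :=
      K.transitive _ _ hT' (fun Y f H => hTi Y)
    have hRP : ∀ ⦃Y : C⦄ ⦃f : Y ⟶ A.obj⦄, R f → P Y := by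
      rintro Y f ⟨Z, g, f', hf', hg, rfl⟩
      exact hTiP Z hg
    refine ⟨fun Z g => R ((ObjectProperty.ι P).map g), ?_, ?_⟩
    · have : Presieve.inAmbient (fun Z g => R ((ObjectProperty.ι P).map g)
          : Presieve A) = R := by
        funext Y f
        apply propext
        constructor
        · rintro ⟨hY, h⟩; exact h
        · intro h; exact ⟨hRP h, h⟩
      rw [this]; exact hR
    · rintro Y f ⟨W, g, f', hf', hg, hcomp⟩
      obtain ⟨Z, g', h, hSg', rfl⟩ := hfac hf'
      -- f as a morphism in C equals g ≫ h ≫ incl.map g'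
      have : f = FullSubcategory.homOf Y.property Z.property (g ≫ h) ≫ g' := by
        have := hcomp
        simp only [← Category.assoc] at this
        apply (ObjectProperty.ι P).map_injective
        rw [Functor.map_comp]
        exact this.symm
      rw [this]
      exact S.downward_closed hSg' _
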